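/- Let F₀ determine a weak, left invariant Finsler metric on a Hilbertian H-type group M = V ⊕ W, with F₀-continuity constant C for the projections. Then every continuous, piecewise continuously differentiable curve γ : [0,1] → M satisfies ℓ_F(γ) ≥ F₀(π₁(γ(1)) − π₁(γ(0)))/C. In particular, d_F(p,q) ≥ F₀(π₁(p) − π₁(q))/C > 0 for all p, q ∈ M with π₁(p) ≠ π₁(q). -/

import Mathlib

open scoped RealInnerProductSpace

/-- A Hilbertian H-type group: a real Hilbert space `M` with an orthogonal decomposition
`M = V ⊕ W` into nontrivial closed subspaces, `W` finite dimensional, a continuous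
skew-symmetric Lie bracket with `[M,M] ⊆ W`, `[M,W] = 0`, and the map `J` determined by
`⟪J z x, y⟫ = ⟪z, [x,y]⟫` satisfying `J_z ∘ J_z = -‖z‖² id` on `V`. -/
structure HTypeGroup (M : Type*) [NormedAddCommGroup M] [InnerProductSpace ℝ M]
    [CompleteSpace M] where
  V : Submodule ℝ M
  W : Submodule ℝ M
  V_closed : IsClosed (V : Set M)
  W_closed : IsClosed (W : Set M)
  V_nontrivial : V ≠ ⊥
  W_nontrivial : W ≠ ⊥
  W_findim : FiniteDimensional ℝ ↥W
  orthogonal : ∀ v ∈ V, ∀ w ∈ W, ⟪v, w⟫ = 0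
  proj1 : M →L[ℝ] M
  proj2 : M →L[ℝ] M
  proj1_mem : ∀ v : M, proj1 v ∈ V
  proj2_mem : ∀ v : M, proj2 v ∈ W
  proj_add : ∀ v : M, proj1 v + proj2 v = v
  bracket : M →L[ℝ] M →L[ℝ] M
  bracket_skew : ∀ u v : M, bracket u v = - bracket v u
  bracket_mem_W : ∀ u v : M, bracket u v ∈ W
  bracket_W : ∀ u : M, ∀ w ∈ W, bracket u w = 0
  Jmap : M →L[ℝ] M →L[ℝ] M
  Jmap_mem_V : ∀ z ∈ W, ∀ x ∈ V, Jmap z x ∈ V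
  Jmap_inner : ∀ z ∈ W, ∀ x ∈ V, ∀ y ∈ V, ⟪Jmap z x, y⟫ = ⟪z, bracket x y⟫
  Jmap_sq : ∀ z ∈ W, ∀ x ∈ V, Jmap z (Jmap z x) = -(‖z‖ ^ 2) • x

/-- A continuous, piecewise continuously differentiable curve on `[0,1]`: a continuous
curve together with a derivative function which is the honest derivative away from a
finite exceptional set, and which is interval integrable. -/
structure PC1Curve (M : Type*) [NormedAddCommGroup M] [NormedSpace ℝ M] where
  toFun : ℝ → M
  deriv : ℝ → M
  continuousOn : ContinuousOn toFun (Set.Icc 0 1)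
  exc : Set ℝ
  exc_finite : exc.Finite
  hasDeriv : ∀ t ∈ Set.Ioo (0 : ℝ) 1 \ exc, HasDerivAt toFun (deriv t) t
  deriv_integrable : IntervalIntegrable deriv MeasureTheory.volume 0 1

/-- The Finsler length `ℓ_F(γ) = ∫₀¹ F₀(γ'(t) - (1/2)[γ(t), γ'(t)]) dt` of a piecewise `C¹`
curve, with respect to the left invariant Finsler metric determined by the norm `F₀`. -/
noncomputable def finslerLength {M : Type*} [NormedAddCommGroup M] [InnerProductSpace ℝ M]
    [CompleteSpace M] (H : HTypeGroup M) (F₀ : M → ℝ) (γ : PC1Curve M) : ℝ :=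
  ∫ t in (0 : ℝ)..1, F₀ (γ.deriv t - (2⁻¹ : ℝ) • H.bracket (γ.toFun t) (γ.deriv t))

/-- The Finsler distance `d_F(p, q)`: the infimum of the Finsler lengths of continuous,
piecewise continuously differentiable curves joining `p` to `q`. -/
noncomputable def finslerDist {M : Type*} [NormedAddCommGroup M] [InnerProductSpace ℝ M]
    [CompleteSpace M] (H : HTypeGroup M) (F₀ : M → ℝ) (p q : M) : ℝ :=
  sInf {L : ℝ | ∃ γ : PC1Curve M, γ.toFun 0 = p ∧ γ.toFun 1 = q ∧ L = finslerLength H F₀ γ}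

/-- For a weak, left invariant Finsler metric `F₀` on a Hilbertian H-type
group `M = V ⊕ W` with projection-continuity constant `C`, every continuous, piecewise
continuously differentiable curve `γ : [0,1] → M` satisfies
`ℓ_F(γ) ≥ F₀(π₁(γ(1)) − π₁(γ(0)))/C`; in particular `d_F(p,q) ≥ F₀(π₁(p) − π₁(q))/C > 0`
whenever `π₁(p) ≠ π₁(q)`. -/
theorem statement_7 {M : Type*} [NormedAddCommGroup M] [InnerProductSpace ℝ M]
    [CompleteSpace M] (H : HTypeGroup M) (F₀ : M → ℝ)
    (hF_add : ∀ u v : M, F₀ (u + v) ≤ F₀ u + F₀ v)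
    (hF_smul : ∀ (c : ℝ) (v : M), F₀ (c • v) = |c| * F₀ v)
    (hF_def : ∀ v : M, F₀ v = 0 → v = 0)
    (c₁ : ℝ) (hc₁ : 0 < c₁) (hF_cont : ∀ v : M, F₀ v ≤ c₁ * ‖v‖)
    (C : ℝ) (hC : 0 < C)
    (hF_proj : ∀ v : M, F₀ (H.proj1 v) ≤ C * F₀ v ∧ F₀ (H.proj2 v) ≤ C * F₀ v) :
    (∀ γ : PC1Curve M,
        F₀ (H.proj1 (γ.toFun 1) - H.proj1 (γ.toFun 0)) / C ≤ finslerLength H F₀ γ) ∧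
    (∀ p q : M, H.proj1 p ≠ H.proj1 q →
        0 < F₀ (H.proj1 p - H.proj1 q) / C ∧
        F₀ (H.proj1 p - H.proj1 q) / C ≤ finslerDist H F₀ p q) := by
  -- Basic facts about F₀
  have hF0 : F₀ 0 = 0 := by simpa using hF_smul 0 0
  have hFneg : ∀ v : M, F₀ (-v) = F₀ v := fun v => by
    simpa using hF_smul (-1) v
  have hFnonneg : ∀ v : M, 0 ≤ F₀ v := by
    intro v
    have h := hF_add v (-v)
    rw [add_neg_cancel, hF0, hFneg] at h
    linarith
  have hFsub : ∀ u v : M, F₀ (u - v) = F₀ (v - u) := by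
    intro u v
    rw [← hFneg (u - v), neg_sub]
  -- proj1 kills W
  have hproj1W : ∀ w ∈ H.W, H.proj1 w = 0 := by
    intro w hw
    have h1 : H.proj1 w ∈ H.V := H.proj1_mem w
    have h2 : H.proj1 w ∈ H.W := by
      have heq : H.proj1 w = w - H.proj2 w := by
        have := H.proj_add w; abel_nf; linear_combination (norm := abel) this
      rw [heq]
      exact H.W.sub_mem hw (H.proj2_mem w)
    exact inner_self_eq_zero.mp (H.orthogonal _ h1 _ h2)
  -- F₀ is Lipschitz continuous
  have hF_lip : ∀ x y : M, |F₀ x - F₀ y| ≤ c₁ * ‖x - y‖ := by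
    intro x y
    have h1 : F₀ x ≤ F₀ (x - y) + F₀ y := by
      have := hF_add (x - y) y; simpa using this
    have h2 : F₀ y ≤ F₀ (x - y) + F₀ x := by
      have := hF_add (y - x) x
      rw [hFsub y x] at this; simpa using this
    have h3 := hF_cont (x - y)
    rw [abs_le]; constructor <;> linarith
  have hF_cts : Continuous F₀ := by
    rw [Metric.continuous_iff]
    intro x ε hε
    refine ⟨ε / c₁, div_pos hε hc₁, fun y hy => ?_⟩
    rw [Real.dist_eq]
    calc |F₀ y - F₀ x| ≤ c₁ * ‖y - x‖ := hF_lip y x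
      _ = c₁ * dist y x := by rw [dist_eq_norm]
      _ < c₁ * (ε / c₁) := by exact mul_lt_mul_of_pos_left hy hc₁
      _ = ε := by field_simp
  -- Key estimate for curves
  have key : ∀ γ : PC1Curve M,
      F₀ (H.proj1 (γ.toFun 1) - H.proj1 (γ.toFun 0)) ≤ C * finslerLength H F₀ γ := by
    intro γ
    set h : ℝ → M := fun t => γ.deriv t - (2⁻¹ : ℝ) • H.bracket (γ.toFun t) (γ.deriv t)
      with hh
    have hγc : ContinuousOn γ.toFun (Set.Icc 0 1) := γ.continuousOn
    have hgi : IntervalIntegrable γ.deriv MeasureTheory.volume 0 1 := γ.deriv_integrable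
    have hgi' : MeasureTheory.IntegrableOn γ.deriv (Set.Ioc 0 1) MeasureTheory.volume := by
      simpa [Set.uIoc_of_le (by norm_num : (0:ℝ) ≤ 1)] using hgi.def'
    -- measurability of γ on Ioc
    have hγm : MeasureTheory.AEStronglyMeasurable γ.toFun
        (MeasureTheory.volume.restrict (Set.Ioc 0 1)) := by
      have this : MeasureTheory.AEStronglyMeasurable γ.toFun
          (MeasureTheory.volume.restrict (Set.Icc 0 1)) :=
        hγc.aestronglyMeasurable measurableSet_Icc
      exact this.mono_measure (MeasureTheory.Measure.restrict_mono Set.Ioc_subset_Icc_self le_rfl)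
    have hgm : MeasureTheory.AEStronglyMeasurable γ.deriv
        (MeasureTheory.volume.restrict (Set.Ioc 0 1)) := hgi'.aestronglyMeasurable
    -- bound on γ
    obtain ⟨K, hK⟩ := isCompact_Icc.exists_bound_of_continuousOn hγc
    -- bracket term integrable
    have hBm : MeasureTheory.AEStronglyMeasurable
        (fun t => H.bracket (γ.toFun t) (γ.deriv t))
        (MeasureTheory.volume.restrict (Set.Ioc 0 1)) :=
      H.bracket.aestronglyMeasurable_comp₂ hγm hgm
    have hBint : MeasureTheory.IntegrableOn
        (fun t => H.bracket (γ.toFun t) (γ.deriv t)) (Set.Ioc 0 1) MeasureTheory.volume := by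
      refine MeasureTheory.Integrable.mono'
        ((hgi'.norm).const_mul (‖H.bracket‖ * K)) hBm ?_
      rw [MeasureTheory.ae_restrict_iff' measurableSet_Ioc]
      filter_upwards with t ht
      calc ‖H.bracket (γ.toFun t) (γ.deriv t)‖
          ≤ ‖H.bracket‖ * ‖γ.toFun t‖ * ‖γ.deriv t‖ := H.bracket.le_opNorm₂ _ _
        _ ≤ ‖H.bracket‖ * K * ‖γ.deriv t‖ := by
            have h1 : ‖γ.toFun t‖ ≤ K := hK _ (Set.Ioc_subset_Icc_self ht)
            have h2 : (0:ℝ) ≤ ‖H.bracket‖ := H.bracket.opNorm_nonneg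
            have h3 : (0:ℝ) ≤ ‖γ.deriv t‖ := norm_nonneg _
            exact mul_le_mul_of_nonneg_right (mul_le_mul_of_nonneg_left h1 h2) h3
    have hInt' : MeasureTheory.IntegrableOn h (Set.Ioc 0 1) MeasureTheory.volume :=
      hgi'.sub (hBint.smul (2⁻¹ : ℝ))
    have hInt : IntervalIntegrable h MeasureTheory.volume 0 1 := by
      rw [intervalIntegrable_iff]
      simpa [Set.uIoc_of_le (by norm_num : (0:ℝ) ≤ 1)] using hInt'
    -- FTC
    have hftc : (∫ t in (0:ℝ)..1, γ.deriv t) = γ.toFun 1 - γ.toFun 0 :=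
      MeasureTheory.integral_eq_of_hasDerivAt_off_countable_of_le γ.toFun γ.deriv
        (by norm_num) γ.exc_finite.countable hγc (fun t ht => γ.hasDeriv t ht) hgi
    -- proj1 of h equals proj1 of the derivative
    have hproj_h : ∀ t, H.proj1 (h t) = H.proj1 (γ.deriv t) := by
      intro t
      simp only [hh, map_sub, map_smul]
      rw [hproj1W _ (H.bracket_mem_W _ _)]
      simp
    set Δ : M := H.proj1 (γ.toFun 1) - H.proj1 (γ.toFun 0) with hΔdef
    have hΔ : Δ = H.proj1 (∫ t in (0:ℝ)..1, h t) := by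
      have h1 : (∫ t in (0:ℝ)..1, H.proj1 (h t)) = H.proj1 (∫ t in (0:ℝ)..1, h t) :=
        H.proj1.intervalIntegral_comp_comm hInt
      have h2 : (∫ t in (0:ℝ)..1, H.proj1 (γ.deriv t))
          = H.proj1 (∫ t in (0:ℝ)..1, γ.deriv t) :=
        H.proj1.intervalIntegral_comp_comm hgi
      have h3 : (∫ t in (0:ℝ)..1, H.proj1 (h t))
          = ∫ t in (0:ℝ)..1, H.proj1 (γ.deriv t) := by
        exact intervalIntegral.integral_congr (fun t _ => hproj_h t)
      rw [hΔdef, ← map_sub, ← hftc, ← h2, ← h3, h1]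
    -- nonnegativity of the length
    have hL0 : 0 ≤ finslerLength H F₀ γ :=
      intervalIntegral.integral_nonneg (by norm_num) (fun t _ => hFnonneg _)
    by_cases hΔ0 : Δ = 0
    · rw [hΔ0, hF0]
      exact mul_nonneg hC.le hL0
    -- Hahn–Banach
    obtain ⟨f, hf_eq, hf_le⟩ := exists_extension_of_le_sublinear
      (LinearPMap.mkSpanSingleton Δ (F₀ Δ) hΔ0) F₀
      (fun c hc x => by rw [hF_smul, abs_of_pos hc])
      hF_add
      (by
        rintro ⟨x, hx⟩
        rcases Submodule.mem_span_singleton.mp hx with ⟨c, rfl⟩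
        have happ : (LinearPMap.mkSpanSingleton Δ (F₀ Δ) hΔ0)
            ⟨c • Δ, hx⟩ = c • F₀ Δ := LinearPMap.mkSpanSingleton'_apply _ _ _ c _
        rw [happ, hF_smul, smul_eq_mul]
        exact mul_le_mul_of_nonneg_right (le_abs_self c) (hFnonneg Δ))
    have hfΔ : f Δ = F₀ Δ := by
      have hmem : Δ ∈ Submodule.span ℝ {Δ} := Submodule.mem_span_singleton_self Δ
      have := hf_eq ⟨Δ, hmem⟩
      rw [this]
      exact LinearPMap.mkSpanSingleton_apply ℝ ℝ hΔ0 (F₀ Δ)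
    have hf_bound : ∀ x : M, ‖f x‖ ≤ c₁ * ‖x‖ := by
      intro x
      rw [Real.norm_eq_abs, abs_le]
      constructor
      · have h1 : f (-x) ≤ F₀ (-x) := hf_le (-x)
        rw [map_neg, hFneg] at h1
        have := hF_cont x; linarith
      · exact (hf_le x).trans (hF_cont x)
    set G : M →L[ℝ] ℝ := f.mkContinuous c₁ hf_bound with hG
    have hGapp : ∀ x : M, G x = f x := fun x => rfl
    -- integrability of the comparison functions
    have hGint : IntervalIntegrable (fun t => G (H.proj1 (h t))) MeasureTheory.volume 0 1 := by
      rw [intervalIntegrable_iff, Set.uIoc_of_le (by norm_num : (0:ℝ) ≤ 1)]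
      exact (G.comp H.proj1).integrable_comp hInt'
    have hFhint : MeasureTheory.IntegrableOn (fun t => F₀ (h t)) (Set.Ioc 0 1)
        MeasureTheory.volume := by
      refine MeasureTheory.Integrable.mono' ((hInt'.norm).const_mul c₁)
        (hF_cts.comp_aestronglyMeasurable hInt'.aestronglyMeasurable) ?_
      filter_upwards with t
      rw [Real.norm_eq_abs, abs_of_nonneg (hFnonneg _)]
      exact hF_cont _
    have hCint : IntervalIntegrable (fun t => C * F₀ (h t)) MeasureTheory.volume 0 1 := by
      rw [intervalIntegrable_iff, Set.uIoc_of_le (by norm_num : (0:ℝ) ≤ 1)]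
      exact hFhint.const_mul C
    -- the main chain of (in)equalities
    have hmain : F₀ Δ ≤ ∫ t in (0:ℝ)..1, C * F₀ (h t) := by
      have hstep : F₀ Δ = ∫ t in (0:ℝ)..1, G (H.proj1 (h t)) := by
        have hc : (∫ t in (0:ℝ)..1, (G.comp H.proj1) (h t))
            = (G.comp H.proj1) (∫ t in (0:ℝ)..1, h t) :=
          (G.comp H.proj1).intervalIntegral_comp_comm hInt
        show F₀ Δ = ∫ t in (0:ℝ)..1, (G.comp H.proj1) (h t)
        rw [hc, ContinuousLinearMap.comp_apply, ← hΔ, hGapp, hfΔ]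
      rw [hstep]
      refine intervalIntegral.integral_mono_on (by norm_num) hGint hCint ?_
      intro t _
      calc G (H.proj1 (h t)) = f (H.proj1 (h t)) := hGapp _
        _ ≤ F₀ (H.proj1 (h t)) := hf_le _
        _ ≤ C * F₀ (h t) := (hF_proj _).1
    calc F₀ Δ ≤ ∫ t in (0:ℝ)..1, C * F₀ (h t) := hmain
      _ = C * ∫ t in (0:ℝ)..1, F₀ (h t) := intervalIntegral.integral_const_mul _ _
      _ = C * finslerLength H F₀ γ := rfl
  constructor
  · intro γ
    rw [div_le_iff₀ hC]
    calc F₀ (H.proj1 (γ.toFun 1) - H.proj1 (γ.toFun 0)) ≤ C * finslerLength H F₀ γ := key γ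
      _ = finslerLength H F₀ γ * C := mul_comm _ _
  · intro p q hpq
    have hpos : 0 < F₀ (H.proj1 p - H.proj1 q) := by
      rcases (hFnonneg (H.proj1 p - H.proj1 q)).lt_or_eq with h | h
      · exact h
      · exact absurd (sub_eq_zero.mp (hF_def _ h.symm)) hpq
    refine ⟨div_pos hpos hC, ?_⟩
    apply le_csInf
    · -- nonempty: the straight line from p to q
      refine ⟨finslerLength H F₀
        { toFun := fun t => p + t • (q - p)
          deriv := fun _ => q - p
          continuousOn := (continuous_const.add
            (continuous_id.smul continuous_const)).continuousOn
          exc := ∅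
          exc_finite := Set.finite_empty
          hasDeriv := fun t _ => by
            simpa using ((hasDerivAt_id t).smul_const (q - p)).const_add p
          deriv_integrable := intervalIntegrable_const },
        _, by simp, by simp, rfl⟩
    · rintro L ⟨γ, h0, h1, rfl⟩
      have hkey := key γ
      rw [h0, h1] at hkey
      rw [div_le_iff₀ hC]
      calc F₀ (H.proj1 p - H.proj1 q) = F₀ (H.proj1 q - H.proj1 p) := hFsub _ _
        _ ≤ C * finslerLength H F₀ γ := hkey
        _ = finslerLength H F₀ γ * C := mul_comm _ _
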